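/- Let X be a pure k-dimensional (d₀,…,d_{k-1})-regular simplicial complex, σ ∈ X(k-2), and S, T ⊆ X_σ(0) disjoint with |S| ≥ |T|. If f assigns i.i.d. uniform ±1 signs to the k-faces of X, then the probability that |⟨1_S, A_σ^{f_σ} 1_T⟩| > 10·√((k² log d_{k-1} / d_{k-1})·|S|·|T|) is at most 2·exp(−25·k²·(ln d_{k-1})·|S ∪ T|), which is at most d_{k-1}^{−10·|S∪T|·k²}. -/

import Mathlib

open scoped Classical
noncomputable section

namespace HDX

variable {V W : Type*}

/-- sign of a Bool as an integer (`true ↦ 1`, `false ↦ -1`). -/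
def sgn (b : Bool) : ℤ := if b then 1 else -1

/-- projection forgetting signs -/
def proj [DecidableEq V] (σ : Finset (V × Bool)) : Finset V := σ.image Prod.fst

/-- product of the signs of a decorated face -/
def signF (σ : Finset (V × Bool)) : ℤ := ∏ x ∈ σ, sgn x.2

/-- the `f`-local lift of a `k`-dimensional complex `X` -/
def localLift [Fintype V] [DecidableEq V] (X : Finset (Finset V)) (f : Finset V → ℤ)
    (k : ℕ) : Finset (Finset (V × Bool)) :=
  Finset.univ.filter (fun σ' => proj σ' ∈ X ∧ σ'.card = (proj σ').card ∧
    (σ'.card = k + 1 → signF σ' = f (proj σ')))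

/-- the link of a face -/
def link [DecidableEq W] (X : Finset (Finset W)) (σ : Finset W) : Finset (Finset W) :=
  (X.filter (fun τ => σ ⊆ τ)).image (fun τ => τ \ σ)

/-- degree of a face: the number of faces of one higher dimension containing it -/
def deg [DecidableEq W] (X : Finset (Finset W)) (σ : Finset W) : ℕ :=
  (X.filter (fun τ => σ ⊆ τ ∧ τ.card = σ.card + 1)).card

/-- a simplicial complex: downward closed (to nonempty subsets) -/
def DownwardClosed (X : Finset (Finset W)) : Prop :=
  ∀ τ ∈ X, ∀ σ : Finset W, σ ⊆ τ → σ.Nonempty → σ ∈ X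

/-- pure `k`-dimensional -/
def Pure (X : Finset (Finset W)) (k : ℕ) : Prop :=
  (∀ τ ∈ X, τ.card ≤ k + 1) ∧ ∀ τ ∈ X, ∃ ρ ∈ X, τ ⊆ ρ ∧ ρ.card = k + 1

/-- `(d 0, …, d (k-1))`-regular -/
def Regular (X : Finset (Finset W)) (k : ℕ) (d : ℕ → ℕ) : Prop :=
  ∀ i < k, ∀ σ ∈ X, σ.card = i + 1 → deg X σ = d i

/-- the vertices of the link of `σ` -/
def linkVert [DecidableEq W] (X : Finset (Finset W)) (σ : Finset W) : Type _ :=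
  {v : W // {v} ∈ link X σ}

instance [Fintype W] [DecidableEq W] (X : Finset (Finset W)) (σ : Finset W) :
    Fintype (linkVert X σ) := Subtype.fintype _

instance [DecidableEq W] (X : Finset (Finset W)) (σ : Finset W) :
    DecidableEq (linkVert X σ) := Subtype.instDecidableEq

/-- random walk matrix of the 1-skeleton of the link of `σ`, normalized by `dreg` -/
def linkRW [Fintype W] [DecidableEq W] (X : Finset (Finset W)) (σ : Finset W) (dreg : ℕ) :
    Matrix (linkVert X σ) (linkVert X σ) ℝ :=
  fun u w => if u.1 ≠ w.1 ∧ {u.1, w.1} ∈ link X σ then (dreg : ℝ)⁻¹ else 0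

/-- signed random walk matrix of the 1-skeleton of the link of `σ` -/
def linkRWSigned [Fintype W] [DecidableEq W] (X : Finset (Finset W)) (σ : Finset W)
    (dreg : ℕ) (g : Finset W → ℤ) : Matrix (linkVert X σ) (linkVert X σ) ℝ :=
  fun u w => if u.1 ≠ w.1 ∧ {u.1, w.1} ∈ link X σ then (g {u.1, w.1} : ℝ) / (dreg : ℝ) else 0

/-- largest absolute value of the eigenvalues other than (one copy of) the trivial
eigenvalue `1`, of a matrix: computed via the roots of the characteristic polynomial. -/
def lam {n : Type*} [Fintype n] [DecidableEq n] (M : Matrix n n ℝ) : ℝ :=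
  (((M.charpoly.roots).erase 1).map (fun x => |x|)).fold max 0

/-- `λ`-two sided high dimensional expander (links normalized by their regular degrees) -/
def IsHDX [Fintype W] [DecidableEq W] (X : Finset (Finset W)) (k : ℕ) (d : ℕ → ℕ)
    (l : ℝ) : Prop :=
  ∀ σ : Finset W, (σ = ∅ ∨ σ ∈ X) → σ.card ≤ k - 1 → lam (linkRW X σ (d σ.card)) ≤ l

/-- the ordered pairs in `S × T` that form an edge of the link of `σ` -/
def pairs [DecidableEq W] (X : Finset (Finset W)) (σ : Finset W) (S T : Finset W) :
    Finset (W × W) :=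
  (S ×ˢ T).filter (fun p => p.1 ≠ p.2 ∧ {p.1, p.2} ∈ link X σ)

/-- `⟨1_S, A_σ 1_T⟩` for the random walk matrix of the link of `σ` -/
def innerRW [DecidableEq W] (X : Finset (Finset W)) (σ : Finset W) (dtop : ℕ)
    (S T : Finset W) : ℝ :=
  ((pairs X σ S T).card : ℝ) / (dtop : ℝ)

/-- `⟨1_S, A_σ^g 1_T⟩` for the `g`-signed random walk matrix of the link of `σ` -/
def innerRWSigned [DecidableEq W] (X : Finset (Finset W)) (σ : Finset W) (dtop : ℕ)
    (g : Finset W → ℤ) (S T : Finset W) : ℝ :=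
  (∑ p ∈ pairs X σ S T, (g {p.1, p.2} : ℝ)) / (dtop : ℝ)

/-- `(β, t)`-sparseness -/
def IsSparse [Fintype W] [DecidableEq W] (X : Finset (Finset W)) (k dtop : ℕ)
    (β t : ℝ) : Prop :=
  ∀ σ ∈ X, σ.card = k - 1 → ∀ S T : Finset W,
    (∀ v ∈ S ∪ T, {v} ∈ link X σ) → ((S ∪ T).card : ℝ) ≤ t →
    innerRW X σ dtop S T ≤ β * Real.sqrt ((S.card : ℝ) * (T.card : ℝ))

/-- the top-dimensional faces of `X` -/
def TopFaces {V : Type*} (X : Finset (Finset V)) (k : ℕ) : Type _ :=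
  {τ : Finset V // τ ∈ X ∧ τ.card = k + 1}

instance {V : Type*} [Fintype V] (X : Finset (Finset V)) (k : ℕ) :
    Fintype (TopFaces X k) := Subtype.fintype _

instance {V : Type*} [DecidableEq V] (X : Finset (Finset V)) (k : ℕ) :
    DecidableEq (TopFaces X k) := Subtype.instDecidableEq

/-- the ±1 value that a sample point `ω` (one fair coin per `k`-face) assigns to a
`k`-face (junk value `1` off the `k`-faces) -/
def fval {V : Type*} [Fintype V] [DecidableEq V] (X : Finset (Finset V)) (k : ℕ)
    (ω : TopFaces X k → Bool) (τ : Finset V) : ℤ :=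
  if h : τ ∈ X ∧ τ.card = k + 1 then sgn (ω ⟨τ, h⟩) else 1

/-- `⟨1_S, A_σ^{f_σ} 1_T⟩` for the random signing determined by `ω` -/
def innerOmega {V : Type*} [Fintype V] [DecidableEq V] (X : Finset (Finset V))
    (k : ℕ) (σ : Finset V) (dtop : ℕ) (S T : Finset V) (ω : TopFaces X k → Bool) : ℝ :=
  (∑ p ∈ pairs X σ S T, (fval X k ω (σ ∪ {p.1, p.2}) : ℝ)) / (dtop : ℝ)


/-! ### Auxiliary lemmas for the Hoeffding bound -/

lemma sgn_not (b : Bool) : sgn (!b) = - sgn b := by cases b <;> simp [sgn]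

lemma mgf_bound {I : Type*} [Fintype I] [DecidableEq I] {α : Type*} [DecidableEq α]
    (F : Finset α) (e : α → I) (he : Set.InjOn e F) (t : ℝ) :
    ∑ ω : I → Bool, Real.exp (t * ∑ p ∈ F, (sgn (ω (e p)) : ℝ)) ≤
      (Fintype.card (I → Bool) : ℝ) * Real.exp (t ^ 2 * F.card / 2) := by
  induction F using Finset.induction_on with
  | empty => simp
  | @insert a s ha ih =>
    have hinj : Set.InjOn e s := he.mono (by intro x hx; exact Finset.mem_insert_of_mem hx)
    have hne : ∀ p ∈ s, e p ≠ e a := by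
      intro p hp hpe
      exact ha (by simpa [he (Finset.mem_insert_of_mem hp) (Finset.mem_insert_self a s) hpe] using hp)
    set flip : (I → Bool) → (I → Bool) := fun ω => Function.update ω (e a) (!(ω (e a))) with hflip
    have hinv : Function.Involutive flip := by
      intro ω
      funext i
      by_cases h : i = e a
      · subst h; simp [hflip]
      · simp [hflip, Function.update_of_ne h]
    have hsum_flip : ∀ ω p, p ∈ s → flip ω (e p) = ω (e p) := by
      intro ω p hp; simp [hflip, Function.update_of_ne (hne p hp)]
    have key : ∀ ω : I → Bool,
        Real.exp (t * ∑ p ∈ insert a s, (sgn (ω (e p)) : ℝ)) +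
        Real.exp (t * ∑ p ∈ insert a s, (sgn (flip ω (e p)) : ℝ)) =
        (Real.exp t + Real.exp (-t)) * Real.exp (t * ∑ p ∈ s, (sgn (ω (e p)) : ℝ)) := by
      intro ω
      rw [Finset.sum_insert ha, Finset.sum_insert ha]
      have h2 : ∑ p ∈ s, (sgn (flip ω (e p)) : ℝ) = ∑ p ∈ s, (sgn (ω (e p)) : ℝ) :=
        Finset.sum_congr rfl (fun p hp => by rw [hsum_flip ω p hp])
      have hfa : flip ω (e a) = !(ω (e a)) := by simp [hflip]
      rw [h2, hfa, sgn_not]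
      cases h : ω (e a) <;>
        simp [sgn, mul_add, Real.exp_add] <;> ring
    have hbij : ∑ ω : I → Bool, Real.exp (t * ∑ p ∈ insert a s, (sgn (flip ω (e p)) : ℝ)) =
        ∑ ω : I → Bool, Real.exp (t * ∑ p ∈ insert a s, (sgn (ω (e p)) : ℝ)) :=
      Fintype.sum_bijective flip hinv.bijective _ _ (fun ω => rfl)
    have h2sum : 2 * ∑ ω : I → Bool, Real.exp (t * ∑ p ∈ insert a s, (sgn (ω (e p)) : ℝ)) =
        (Real.exp t + Real.exp (-t)) *
          ∑ ω : I → Bool, Real.exp (t * ∑ p ∈ s, (sgn (ω (e p)) : ℝ)) := by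
      rw [two_mul]
      nth_rewrite 2 [← hbij]
      rw [← Finset.sum_add_distrib, Finset.mul_sum]
      exact Finset.sum_congr rfl (fun ω _ => key ω)
    have hcosh : Real.exp t + Real.exp (-t) ≤ 2 * Real.exp (t ^ 2 / 2) := by
      have := Real.cosh_le_exp_half_sq t
      rw [Real.cosh_eq] at this
      linarith
    have hpos : (0:ℝ) ≤ ∑ ω : I → Bool, Real.exp (t * ∑ p ∈ s, (sgn (ω (e p)) : ℝ)) :=
      Finset.sum_nonneg (fun _ _ => (Real.exp_pos _).le)
    have hcard : ((insert a s).card : ℝ) = s.card + 1 := by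
      rw [Finset.card_insert_of_notMem ha]; push_cast; ring
    calc ∑ ω : I → Bool, Real.exp (t * ∑ p ∈ insert a s, (sgn (ω (e p)) : ℝ))
        = ((Real.exp t + Real.exp (-t)) / 2) *
          ∑ ω : I → Bool, Real.exp (t * ∑ p ∈ s, (sgn (ω (e p)) : ℝ)) := by linarith
      _ ≤ Real.exp (t ^ 2 / 2) *
          ((Fintype.card (I → Bool) : ℝ) * Real.exp (t ^ 2 * s.card / 2)) := by
          apply mul_le_mul _ (ih hinj) hpos (Real.exp_pos _).le
          linarith
      _ = (Fintype.card (I → Bool) : ℝ) * Real.exp (t ^ 2 * (insert a s).card / 2) := by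
          rw [hcard, mul_left_comm, ← Real.exp_add]
          ring_nf

lemma chernoff_one_sided {I : Type*} [Fintype I] [DecidableEq I] {α : Type*} [DecidableEq α]
    (F : Finset α) (e : α → I) (he : Set.InjOn e F) (a : ℝ) (ha : 0 ≤ a) (hn : 0 < F.card) :
    ((Finset.univ.filter (fun ω : I → Bool =>
        a < ∑ p ∈ F, (sgn (ω (e p)) : ℝ))).card : ℝ) ≤
      (Fintype.card (I → Bool) : ℝ) * Real.exp (-(a ^ 2 / (2 * F.card))) := by
  set n : ℝ := (F.card : ℝ) with hnn
  have hnpos : (0:ℝ) < n := by rw [hnn]; exact_mod_cast hn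
  set t : ℝ := a / n with ht
  have htpos : 0 ≤ t := div_nonneg ha hnpos.le
  set c := ((Finset.univ.filter (fun ω : I → Bool =>
        a < ∑ p ∈ F, (sgn (ω (e p)) : ℝ))).card : ℝ) with hc
  have h1 : c * Real.exp (t * a) ≤
      ∑ ω : I → Bool, Real.exp (t * ∑ p ∈ F, (sgn (ω (e p)) : ℝ)) := by
    calc c * Real.exp (t * a)
        = ∑ _ω ∈ Finset.univ.filter (fun ω : I → Bool =>
            a < ∑ p ∈ F, (sgn (ω (e p)) : ℝ)), Real.exp (t * a) := by
          rw [Finset.sum_const, nsmul_eq_mul]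
      _ ≤ ∑ ω ∈ Finset.univ.filter (fun ω : I → Bool =>
            a < ∑ p ∈ F, (sgn (ω (e p)) : ℝ)),
            Real.exp (t * ∑ p ∈ F, (sgn (ω (e p)) : ℝ)) :=
          Finset.sum_le_sum (fun ω hω => Real.exp_le_exp.2
            (mul_le_mul_of_nonneg_left (le_of_lt (Finset.mem_filter.1 hω).2) htpos))
      _ ≤ ∑ ω : I → Bool, Real.exp (t * ∑ p ∈ F, (sgn (ω (e p)) : ℝ)) :=
          Finset.sum_le_sum_of_subset_of_nonneg (Finset.filter_subset _ _)
            (fun _ _ _ => (Real.exp_pos _).le)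
  have h2 : c ≤ (Fintype.card (I → Bool) : ℝ) * Real.exp (t ^ 2 * n / 2) / Real.exp (t * a) :=
    (le_div_iff₀ (Real.exp_pos _)).2 (h1.trans (mgf_bound F e he t))
  have h3 : (Fintype.card (I → Bool) : ℝ) * Real.exp (t ^ 2 * n / 2) / Real.exp (t * a) =
      (Fintype.card (I → Bool) : ℝ) * Real.exp (t ^ 2 * n / 2 - t * a) := by
    rw [Real.exp_sub]; ring
  have h4 : t ^ 2 * n / 2 - t * a = -(a ^ 2 / (2 * n)) := by
    rw [ht]; field_simp; ring
  rw [h3, h4] at h2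
  exact h2

lemma chernoff_two_sided {I : Type*} [Fintype I] [DecidableEq I] {α : Type*} [DecidableEq α]
    (F : Finset α) (e : α → I) (he : Set.InjOn e F) (a : ℝ) (ha : 0 ≤ a) (hn : 0 < F.card) :
    ((Finset.univ.filter (fun ω : I → Bool =>
        a < |∑ p ∈ F, (sgn (ω (e p)) : ℝ)|)).card : ℝ) ≤
      2 * (Fintype.card (I → Bool) : ℝ) * Real.exp (-(a ^ 2 / (2 * F.card))) := by
  set A := Finset.univ.filter (fun ω : I → Bool => a < ∑ p ∈ F, (sgn (ω (e p)) : ℝ)) with hA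
  set B := Finset.univ.filter
    (fun ω : I → Bool => ∑ p ∈ F, (sgn (ω (e p)) : ℝ) < -a) with hB
  have hsub : Finset.univ.filter (fun ω : I → Bool =>
      a < |∑ p ∈ F, (sgn (ω (e p)) : ℝ)|) ⊆ A ∪ B := by
    intro ω hω
    rw [Finset.mem_filter] at hω
    rcases lt_abs.1 hω.2 with h | h
    · exact Finset.mem_union_left _ (Finset.mem_filter.2 ⟨Finset.mem_univ _, h⟩)
    · exact Finset.mem_union_right _ (Finset.mem_filter.2 ⟨Finset.mem_univ _, by linarith⟩)
  have hBA : B.card = A.card := by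
    apply Finset.card_bij' (fun ω _ => fun i => !(ω i)) (fun ω _ => fun i => !(ω i))
    · intro ω hω
      rw [hA, Finset.mem_filter]
      refine ⟨Finset.mem_univ _, ?_⟩
      rw [hB, Finset.mem_filter] at hω
      have : ∑ p ∈ F, (sgn (!(ω (e p))) : ℝ) = -∑ p ∈ F, (sgn (ω (e p)) : ℝ) := by
        rw [← Finset.sum_neg_distrib]
        exact Finset.sum_congr rfl (fun p _ => by rw [sgn_not]; push_cast; ring)
      rw [this]
      linarith [hω.2]
    · intro ω hω
      rw [hB, Finset.mem_filter]
      refine ⟨Finset.mem_univ _, ?_⟩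
      rw [hA, Finset.mem_filter] at hω
      have : ∑ p ∈ F, (sgn (!(ω (e p))) : ℝ) = -∑ p ∈ F, (sgn (ω (e p)) : ℝ) := by
        rw [← Finset.sum_neg_distrib]
        exact Finset.sum_congr rfl (fun p _ => by rw [sgn_not]; push_cast; ring)
      rw [this]
      linarith [hω.2]
    · intro ω _; funext i; simp
    · intro ω _; funext i; simp
  calc ((Finset.univ.filter (fun ω : I → Bool =>
        a < |∑ p ∈ F, (sgn (ω (e p)) : ℝ)|)).card : ℝ)
      ≤ ((A ∪ B).card : ℝ) := by exact_mod_cast Finset.card_le_card hsub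
    _ ≤ (A.card : ℝ) + (B.card : ℝ) := by exact_mod_cast Finset.card_union_le A B
    _ = 2 * (A.card : ℝ) := by rw [hBA]; ring
    _ ≤ 2 * ((Fintype.card (I → Bool) : ℝ) * Real.exp (-(a ^ 2 / (2 * F.card)))) := by
        have := chernoff_one_sided F e he a ha hn
        linarith
    _ = 2 * (Fintype.card (I → Bool) : ℝ) * Real.exp (-(a ^ 2 / (2 * F.card))) := by ring

lemma not_mem_of_link [DecidableEq W] {X : Finset (Finset W)} {σ : Finset W} {v : W}
    (h : ({v} : Finset W) ∈ link X σ) : v ∉ σ := by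
  rw [link, Finset.mem_image] at h
  obtain ⟨τ, hτ, hτv⟩ := h
  have : v ∈ τ \ σ := by rw [hτv]; exact Finset.mem_singleton_self v
  exact (Finset.mem_sdiff.1 this).2

lemma mem_pairs [DecidableEq W] {X : Finset (Finset W)} {σ : Finset W} {S T : Finset W}
    {p : W × W} (hp : p ∈ pairs X σ S T) :
    p.1 ∈ S ∧ p.2 ∈ T ∧ p.1 ≠ p.2 ∧ {p.1, p.2} ∈ link X σ := by
  rw [pairs, Finset.mem_filter, Finset.mem_product] at hp
  exact ⟨hp.1.1, hp.1.2, hp.2.1, hp.2.2⟩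

lemma face_spec [DecidableEq W] {X : Finset (Finset W)} {σ : Finset W} {u v : W}
    (huv : u ≠ v) (h : ({u, v} : Finset W) ∈ link X σ) :
    σ ∪ {u, v} ∈ X ∧ (σ ∪ {u, v}).card = σ.card + 2 := by
  rw [link, Finset.mem_image] at h
  obtain ⟨τ, hτ, hτuv⟩ := h
  rw [Finset.mem_filter] at hτ
  have heq : σ ∪ {u, v} = τ := by
    rw [← hτuv]; exact Finset.union_sdiff_of_subset hτ.2
  have hcard : τ.card = σ.card + 2 := by
    have h1 := Finset.card_sdiff_add_card_eq_card hτ.2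
    rw [hτuv, Finset.card_pair huv] at h1
    omega
  rw [heq]; exact ⟨hτ.1, hcard⟩

lemma face_injOn [DecidableEq W] {X : Finset (Finset W)} {σ : Finset W} {S T : Finset W}
    (hS : ∀ v ∈ S ∪ T, ({v} : Finset W) ∈ link X σ) (hdisj : Disjoint S T) :
    ∀ p ∈ pairs X σ S T, ∀ q ∈ pairs X σ S T,
      σ ∪ {p.1, p.2} = σ ∪ {q.1, q.2} → p = q := by
  intro p hp q hq heq
  obtain ⟨hp1, hp2, -, -⟩ := mem_pairs hp
  obtain ⟨hq1, hq2, -, -⟩ := mem_pairs hq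
  have hp1σ : p.1 ∉ σ := not_mem_of_link (hS _ (Finset.mem_union_left _ hp1))
  have hp2σ : p.2 ∉ σ := not_mem_of_link (hS _ (Finset.mem_union_right _ hp2))
  have h1 : p.1 ∈ σ ∪ {q.1, q.2} := by
    rw [← heq]; exact Finset.mem_union_right _ (by simp)
  have h2 : p.2 ∈ σ ∪ {q.1, q.2} := by
    rw [← heq]; exact Finset.mem_union_right _ (by simp)
  have hp1' : p.1 = q.1 := by
    rcases Finset.mem_union.1 h1 with h | h
    · exact absurd h hp1σ
    · rcases Finset.mem_insert.1 h with h | h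
      · exact h
      · rw [Finset.mem_singleton] at h
        exact absurd hp1 (Finset.disjoint_right.1 hdisj (h ▸ hq2))
  have hp2' : p.2 = q.2 := by
    rcases Finset.mem_union.1 h2 with h | h
    · exact absurd h hp2σ
    · rcases Finset.mem_insert.1 h with h | h
      · exact absurd (h ▸ hp2) (Finset.disjoint_left.1 hdisj hq1)
      · exact Finset.mem_singleton.1 h
  exact Prod.ext hp1' hp2'

lemma pairs_card_le [DecidableEq W] {X : Finset (Finset W)} {σ : Finset W} {S T : Finset W}
    {k : ℕ} {d : ℕ → ℕ} (hk : 2 ≤ k) (hdc : DownwardClosed X) (hreg : Regular X k d)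
    (hσcard : σ.card = k - 1)
    (hS : ∀ v ∈ S ∪ T, ({v} : Finset W) ∈ link X σ) (hdisj : Disjoint S T) :
    (pairs X σ S T).card ≤ d (k - 1) * T.card := by
  have hfib : (pairs X σ S T).card =
      ∑ t ∈ T, ((pairs X σ S T).filter (fun p => p.2 = t)).card :=
    Finset.card_eq_sum_card_fiberwise (fun p hp => (mem_pairs hp).2.1)
  rw [hfib, mul_comm]
  calc ∑ t ∈ T, ((pairs X σ S T).filter (fun p => p.2 = t)).card
      ≤ ∑ _t ∈ T, d (k - 1) := by
        apply Finset.sum_le_sum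
        intro t ht
        rcases Finset.eq_empty_or_nonempty
          ((pairs X σ S T).filter (fun p => p.2 = t)) with h | h
        · simp [h]
        · obtain ⟨p₀, hp₀⟩ := h
          rw [Finset.mem_filter] at hp₀
          obtain ⟨hp₀P, hp₀t⟩ := hp₀
          obtain ⟨hp₀1, hp₀2, hp₀ne, hp₀link⟩ := mem_pairs hp₀P
          have htσ : t ∉ σ := not_mem_of_link (hS _ (Finset.mem_union_right _ ht))
          have hface := face_spec hp₀ne hp₀link
          have hsub : σ ∪ {t} ⊆ σ ∪ {p₀.1, p₀.2} := by
            apply Finset.union_subset_union_right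
            rw [hp₀t]; intro x hx
            rw [Finset.mem_singleton] at hx
            simp [hx]
          have hmem : σ ∪ {t} ∈ X := by
            apply hdc _ hface.1 _ hsub
              ⟨t, Finset.mem_union_right _ (Finset.mem_singleton_self t)⟩
          have hcardσt : (σ ∪ {t}).card = k := by
            rw [Finset.card_union_of_disjoint (Finset.disjoint_singleton_right.2 htσ),
              Finset.card_singleton, hσcard]
            omega
          have hdeg : deg X (σ ∪ {t}) = d (k - 1) := by
            have h := hreg (k - 1) (by omega) (σ ∪ {t}) hmem (by rw [hcardσt]; omega)
            unfold deg at h ⊢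
            convert h using 2
            ext τ
            simp [Finset.mem_filter]
          rw [← hdeg, deg]
          apply Finset.card_le_card_of_injOn (fun p => σ ∪ {p.1, p.2})
          · intro p hp
            rw [Finset.mem_coe, Finset.mem_filter] at hp ⊢
            obtain ⟨hpP, hpt⟩ := hp
            obtain ⟨hS1, hS2, hne', hlink⟩ := mem_pairs hpP
            have hf := face_spec hne' hlink
            refine ⟨hf.1, ?_, ?_⟩
            · apply Finset.union_subset_union_right
              rw [hpt]; intro x hx
              rw [Finset.mem_singleton] at hx; simp [hx]
            · rw [hf.2, hcardσt, hσcard]; omega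
          · intro p hp q hq heq
            simp only [Finset.coe_filter, Set.mem_setOf_eq] at hp hq
            exact face_injOn hS hdisj p hp.1 q hq.1 heq
      _ = T.card * d (k - 1) := by rw [Finset.sum_const, smul_eq_mul]

set_option maxHeartbeats 2000000 in
/-- Hoeffding bound for one bad event: for a `(k-2)`-face `σ` and
disjoint `S, T ⊆ X_σ(0)` with `|S| ≥ |T|`, under i.i.d. uniform ±1 signs on the
`k`-faces, the probability that
`|⟨1_S, A_σ^{f_σ} 1_T⟩| > 10√((k² log d_{k-1}/d_{k-1})|S||T|)` is at most
`2·exp(−25k²(ln d_{k-1})|S∪T|) ≤ d_{k-1}^{−10|S∪T|k²}`. -/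
theorem bad_event_prob {V : Type*} [Fintype V] [DecidableEq V]
    (k : ℕ) (hk : 2 ≤ k) (X : Finset (Finset V)) (hdc : DownwardClosed X)
    (hpure : Pure X k) (d : ℕ → ℕ) (hreg : Regular X k d) (hd : 2 ≤ d (k - 1))
    (σ : Finset V) (hσ : σ ∈ X) (hσcard : σ.card = k - 1)
    (S T : Finset V) (hS : ∀ v ∈ S ∪ T, ({v} : Finset V) ∈ link X σ)
    (hdisj : Disjoint S T) (hbig : T.card ≤ S.card) (hne : (S ∪ T).Nonempty) :
    ((Finset.univ.filter (fun ω : TopFaces X k → Bool =>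
        10 * Real.sqrt (((k : ℝ) ^ 2 * Real.logb 2 (d (k - 1)) / (d (k - 1))) *
          ((S.card : ℝ) * (T.card : ℝ))) <
        |innerOmega X k σ (d (k - 1)) S T ω|)).card : ℝ) /
      (Fintype.card (TopFaces X k → Bool) : ℝ) ≤
      2 * Real.exp (-(25 * (k : ℝ) ^ 2 * Real.log (d (k - 1)) * ((S ∪ T).card : ℝ))) ∧
    2 * Real.exp (-(25 * (k : ℝ) ^ 2 * Real.log (d (k - 1)) * ((S ∪ T).card : ℝ))) ≤
      ((d (k - 1) : ℝ)) ^ (-(10 * ((S ∪ T).card : ℝ) * (k : ℝ) ^ 2)) := by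
  have hD0 : (0:ℝ) < (d (k - 1) : ℝ) := by exact_mod_cast (by omega : 0 < d (k - 1))
  have hD1 : (1:ℝ) ≤ (d (k - 1) : ℝ) := by exact_mod_cast (by omega : 1 ≤ d (k - 1))
  have hD2 : (2:ℝ) ≤ (d (k - 1) : ℝ) := by exact_mod_cast hd
  have hu1 : (1:ℝ) ≤ ((S ∪ T).card : ℝ) := by exact_mod_cast Finset.card_pos.2 hne
  have hk2 : (2:ℝ) ≤ (k:ℝ) := by exact_mod_cast hk
  have hlog2 : (0:ℝ) < Real.log 2 := Real.log_pos one_lt_two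
  have hlogD2 : Real.log 2 ≤ Real.log (d (k - 1)) := Real.log_le_log (by norm_num) hD2
  have hlogD : (0:ℝ) ≤ Real.log (d (k - 1)) := by linarith
  have hlogb : (0:ℝ) ≤ Real.logb 2 (d (k - 1)) := Real.logb_nonneg one_lt_two hD1
  constructor
  · -- the Hoeffding bound
    set P := pairs X σ S T with hP
    have hface : ∀ p ∈ P, σ ∪ {p.1, p.2} ∈ X ∧ (σ ∪ {p.1, p.2}).card = k + 1 := by
      intro p hp
      obtain ⟨h1, h2, hne', hlink⟩ := mem_pairs hp
      have hf := face_spec hne' hlink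
      exact ⟨hf.1, by rw [hf.2, hσcard]; omega⟩
    set a₀ : ℝ := 10 * Real.sqrt (((k : ℝ) ^ 2 * Real.logb 2 (d (k - 1)) / (d (k - 1))) *
      ((S.card : ℝ) * (T.card : ℝ))) with ha₀
    have hx0 : (0:ℝ) ≤ ((k : ℝ) ^ 2 * Real.logb 2 (d (k - 1)) / (d (k - 1))) *
        ((S.card : ℝ) * (T.card : ℝ)) :=
      mul_nonneg (div_nonneg (mul_nonneg (sq_nonneg _) hlogb) hD0.le)
        (mul_nonneg (Nat.cast_nonneg _) (Nat.cast_nonneg _))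
    have ha₀nn : 0 ≤ a₀ := by rw [ha₀]; positivity
    rcases Finset.eq_empty_or_nonempty P with hPe | hPne
    · have hempty : Finset.univ.filter (fun ω : TopFaces X k → Bool =>
          a₀ < |innerOmega X k σ (d (k - 1)) S T ω|) = ∅ := by
        rw [Finset.filter_eq_empty_iff]
        intro ω _
        have hio : innerOmega X k σ (d (k - 1)) S T ω = 0 := by
          rw [innerOmega, ← hP, hPe]
          simp
        rw [hio, abs_zero, not_lt]
        exact ha₀nn
      rw [hempty]
      simp only [Finset.card_empty, Nat.cast_zero, zero_div]
      positivity
    · have hPn : 0 < P.card := Finset.card_pos.2 hPne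
      have hTpos : 0 < T.card := by
        obtain ⟨p, hp⟩ := hPne
        exact Finset.card_pos.2 ⟨p.2, (mem_pairs hp).2.1⟩
      have htR : (1:ℝ) ≤ (T.card : ℝ) := by exact_mod_cast hTpos
      have hsR : (1:ℝ) ≤ (S.card : ℝ) := by
        have : (T.card : ℝ) ≤ (S.card : ℝ) := by exact_mod_cast hbig
        linarith
      set e : {p // p ∈ P} → TopFaces X k :=
        fun q => ⟨σ ∪ {q.1.1, q.1.2}, hface q.1 q.2⟩ with he
      have hsum : ∀ ω : TopFaces X k → Bool,
          ∑ p ∈ P, ((fval X k ω (σ ∪ {p.1, p.2}) : ℤ) : ℝ) =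
          ∑ q ∈ P.attach, ((sgn (ω (e q)) : ℤ) : ℝ) := by
        intro ω
        rw [← Finset.sum_attach P (fun p => ((fval X k ω (σ ∪ {p.1, p.2}) : ℤ) : ℝ))]
        apply Finset.sum_congr rfl
        intro q _
        have hq := hface q.1 q.2
        simp only [fval, dif_pos hq, he]
      have heinj : Set.InjOn e ↑P.attach := by
        intro q _ q' _ heq
        have hfe : σ ∪ {q.1.1, q.1.2} = σ ∪ {q'.1.1, q'.1.2} := congrArg Subtype.val heq
        exact Subtype.ext (face_injOn hS hdisj q.1 q.2 q'.1 q'.2 hfe)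
      have hchern := chernoff_two_sided P.attach e heinj (a₀ * (d (k - 1) : ℝ))
        (mul_nonneg ha₀nn hD0.le) (by rw [Finset.card_attach]; exact hPn)
      have hfilter : Finset.univ.filter (fun ω : TopFaces X k → Bool =>
          a₀ < |innerOmega X k σ (d (k - 1)) S T ω|) =
          Finset.univ.filter (fun ω : TopFaces X k → Bool =>
            a₀ * (d (k - 1) : ℝ) < |∑ q ∈ P.attach, ((sgn (ω (e q)) : ℤ) : ℝ)|) := by
        apply Finset.filter_congr
        intro ω _
        rw [innerOmega, ← hP, hsum ω, abs_div, abs_of_pos hD0, lt_div_iff₀ hD0]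
      rw [hfilter]
      have hNpos : 0 < (Fintype.card (TopFaces X k → Bool) : ℝ) := by
        exact_mod_cast Fintype.card_pos
      rw [div_le_iff₀ hNpos]
      have hn : (P.card : ℝ) ≤ (d (k - 1) : ℝ) * (T.card : ℝ) := by
        exact_mod_cast pairs_card_le hk hdc hreg hσcard hS hdisj
      have hsq : a₀ ^ 2 = 100 * (((k : ℝ) ^ 2 * Real.logb 2 (d (k - 1)) / (d (k - 1))) *
          ((S.card : ℝ) * (T.card : ℝ))) := by
        rw [ha₀, mul_pow, Real.sq_sqrt hx0]
        norm_num
      have hkey : 25 * (k:ℝ) ^ 2 * Real.log (d (k - 1)) * ((S ∪ T).card : ℝ) ≤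
          (a₀ * (d (k - 1) : ℝ)) ^ 2 / (2 * (P.card : ℝ)) := by
        have hu2 : ((S ∪ T).card : ℝ) ≤ 2 * (S.card : ℝ) := by
          have h1 : (S ∪ T).card = S.card + T.card := Finset.card_union_of_disjoint hdisj
          have h2 : (T.card : ℝ) ≤ (S.card : ℝ) := by exact_mod_cast hbig
          rw [h1]; push_cast; linarith
        have hlb : Real.log (d (k - 1)) ≤ Real.logb 2 (d (k - 1)) := by
          rw [Real.logb, le_div_iff₀ hlog2]
          nlinarith [Real.log_two_lt_d9]
        have l1 : 25 * (k:ℝ) ^ 2 * Real.log (d (k - 1)) * ((S ∪ T).card : ℝ) ≤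
            50 * (k:ℝ) ^ 2 * Real.log (d (k - 1)) * (S.card : ℝ) := by
          nlinarith [mul_le_mul_of_nonneg_left hu2
            (mul_nonneg (mul_nonneg (by norm_num : (0:ℝ) ≤ 25) (sq_nonneg (k:ℝ))) hlogD)]
        have l2 : 50 * (k:ℝ) ^ 2 * Real.log (d (k - 1)) * (S.card : ℝ) ≤
            50 * (k:ℝ) ^ 2 * Real.logb 2 (d (k - 1)) * (S.card : ℝ) := by
          have := mul_le_mul_of_nonneg_left hlb
            (mul_nonneg (by norm_num : (0:ℝ) ≤ 50) (sq_nonneg (k:ℝ)))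
          nlinarith [this, hsR]
        have l3 : 50 * (k:ℝ) ^ 2 * Real.logb 2 (d (k - 1)) * (S.card : ℝ) =
            (a₀ * (d (k - 1) : ℝ)) ^ 2 / (2 * ((d (k - 1) : ℝ) * (T.card : ℝ))) := by
          rw [mul_pow, hsq]
          have hT0 : (T.card : ℝ) ≠ 0 := by linarith
          field_simp
          ring
        have l4 : (a₀ * (d (k - 1) : ℝ)) ^ 2 / (2 * ((d (k - 1) : ℝ) * (T.card : ℝ))) ≤
            (a₀ * (d (k - 1) : ℝ)) ^ 2 / (2 * (P.card : ℝ)) := by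
          apply div_le_div_of_nonneg_left (sq_nonneg _)
          · have : (0:ℝ) < (P.card : ℝ) := by exact_mod_cast hPn
            linarith
          · linarith
        linarith
      calc ((Finset.univ.filter (fun ω : TopFaces X k → Bool =>
            a₀ * (d (k - 1) : ℝ) <
              |∑ q ∈ P.attach, ((sgn (ω (e q)) : ℤ) : ℝ)|)).card : ℝ)
          ≤ 2 * (Fintype.card (TopFaces X k → Bool) : ℝ) *
            Real.exp (-((a₀ * (d (k - 1) : ℝ)) ^ 2 / (2 * (P.attach.card : ℝ)))) := hchern
        _ ≤ 2 * Real.exp (-(25 * (k : ℝ) ^ 2 * Real.log (d (k - 1)) *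
              ((S ∪ T).card : ℝ))) * (Fintype.card (TopFaces X k → Bool) : ℝ) := by
            rw [Finset.card_attach]
            have hee := Real.exp_le_exp.2 (neg_le_neg hkey)
            nlinarith [hNpos, Real.exp_pos (-((a₀ * (d (k - 1) : ℝ)) ^ 2 / (2 * (P.card : ℝ))))]
  · -- comparison with the power bound
    rw [Real.rpow_def_of_pos hD0]
    nth_rewrite 1 [show (2:ℝ) = Real.exp (Real.log 2) from (Real.exp_log (by norm_num)).symm]
    rw [← Real.exp_add, Real.exp_le_exp]
    have hK : (4:ℝ) ≤ (k:ℝ) ^ 2 := by nlinarith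
    have h5 : (4:ℝ) * Real.log 2 ≤ (k:ℝ) ^ 2 * Real.log (d (k - 1)) :=
      mul_le_mul hK hlogD2 hlog2.le (by positivity)
    have h6 : (k:ℝ) ^ 2 * Real.log (d (k - 1)) ≤
        ((S ∪ T).card : ℝ) * ((k:ℝ) ^ 2 * Real.log (d (k - 1))) :=
      le_mul_of_one_le_left (by positivity) hu1
    nlinarith [h5, h6]

end HDX
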